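/- arXiv:1103.3939 — 2 statements merged into one kernel-verified Lean document; each statement's English description precedes it below -/
import Mathlib

section
/- Let G be a finite group whose commutator subgroup G' has index 2 in G and which has no irreducible complex representation of degree 2 (i.e., 2 ∉ cd(G)). Then G' is perfect, that is, G'' = G'. -/
open CategoryTheory CategoryTheory.Limits

namespace Stmt12Aux

def dmap (a b : ℂ) : ℂ × ℂ →ₗ[ℂ] ℂ × ℂ where
  toFun p := (a * p.1, b * p.2)
  map_add' p q := by simp [Prod.ext_iff]; constructor <;> ring
  map_smul' c p := by simp [Prod.ext_iff]; constructor <;> ring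

def smap (a b : ℂ) : ℂ × ℂ →ₗ[ℂ] ℂ × ℂ where
  toFun p := (a * p.2, b * p.1)
  map_add' p q := by simp [Prod.ext_iff]; constructor <;> ring
  map_smul' c p := by simp [Prod.ext_iff]; constructor <;> ring

@[simp] lemma dmap_apply (a b : ℂ) (p : ℂ × ℂ) : dmap a b p = (a * p.1, b * p.2) := rfl
@[simp] lemma smap_apply (a b : ℂ) (p : ℂ × ℂ) : smap a b p = (a * p.2, b * p.1) := rfl

variable {G : Type} [Group G] (H : Subgroup G) (lam : ↥H →* ℂˣ)

open scoped Classical in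
noncomputable def Lam (g : G) : ℂ := if h : g ∈ H then (lam ⟨g, h⟩ : ℂ) else 1

lemma Lam_ne_zero (g : G) : Lam H lam g ≠ 0 := by
  rw [Lam]; split
  · exact Units.ne_zero _
  · exact one_ne_zero

lemma Lam_mem {g : G} (hg : g ∈ H) : Lam H lam g = (lam ⟨g, hg⟩ : ℂ) := by rw [Lam, dif_pos hg]

lemma Lam_mul {a b : G} (ha : a ∈ H) (hb : b ∈ H) :
    Lam H lam (a * b) = Lam H lam a * Lam H lam b := by
  rw [Lam_mem H lam ha, Lam_mem H lam hb, Lam_mem H lam (mul_mem ha hb),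
    show (⟨a * b, mul_mem ha hb⟩ : H) = ⟨a, ha⟩ * ⟨b, hb⟩ from rfl, map_mul, Units.val_mul]

lemma Lam_one : Lam H lam 1 = 1 := by
  rw [Lam_mem H lam (one_mem H), show (⟨1, one_mem H⟩ : H) = 1 from rfl, map_one, Units.val_one]

variable {t : G}

lemma mem_conj [H.Normal] {g : G} (hg : g ∈ H) (s : G) : s⁻¹ * g * s ∈ H := by
  simpa using Subgroup.Normal.conj_mem ‹H.Normal› g hg s⁻¹

lemma not_mem_inv (ht : t ∉ H) : t⁻¹ ∉ H := fun h => ht (by simpa using inv_mem h)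

lemma mul_mem_of_not_mem (hH : H.index = 2) {a b : G} (ha : a ∉ H) (hb : b ∉ H) : a * b ∈ H :=
  (Subgroup.mul_mem_iff_of_index_two hH).mpr (iff_of_false ha hb)

lemma mul_not_mem_left (hH : H.index = 2) {a b : G} (ha : a ∈ H) (hb : b ∉ H) : a * b ∉ H :=
  fun h => hb (((Subgroup.mul_mem_iff_of_index_two hH).mp h).mp ha)

lemma mul_not_mem_right (hH : H.index = 2) {a b : G} (ha : a ∉ H) (hb : b ∈ H) : a * b ∉ H :=
  fun h => ha (((Subgroup.mul_mem_iff_of_index_two hH).mp h).mpr hb)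

open scoped Classical in
noncomputable def rhoFun (t g : G) : ℂ × ℂ →ₗ[ℂ] ℂ × ℂ :=
  if g ∈ H then dmap (Lam H lam g) (Lam H lam (t⁻¹ * g * t))
  else smap (Lam H lam (g * t)) (Lam H lam (t⁻¹ * g))

lemma rhoFun_of_mem (t : G) {g : G} (hg : g ∈ H) :
    rhoFun H lam t g = dmap (Lam H lam g) (Lam H lam (t⁻¹ * g * t)) := if_pos hg

lemma rhoFun_of_not_mem (t : G) {g : G} (hg : g ∉ H) :
    rhoFun H lam t g = smap (Lam H lam (g * t)) (Lam H lam (t⁻¹ * g)) := if_neg hg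

/-- The induced representation of the character `lam`. -/
noncomputable def rep [H.Normal] (hH : H.index = 2) (t : G) (ht : t ∉ H) :
    Representation ℂ G (ℂ × ℂ) where
  toFun := rhoFun H lam t
  map_one' := by
    rw [rhoFun_of_mem H lam t (one_mem H)]
    refine LinearMap.ext fun p => ?_
    simp [Lam_one]
  map_mul' g₁ g₂ := by
    refine LinearMap.ext fun p => ?_
    rw [Module.End.mul_apply]
    by_cases h₁ : g₁ ∈ H <;> by_cases h₂ : g₂ ∈ H
    · rw [rhoFun_of_mem H lam t h₁, rhoFun_of_mem H lam t h₂, rhoFun_of_mem H lam t (mul_mem h₁ h₂)]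
      simp only [dmap_apply, Prod.mk.injEq]
      constructor
      · rw [Lam_mul H lam h₁ h₂, mul_assoc]
      · rw [show t⁻¹ * (g₁ * g₂) * t = (t⁻¹ * g₁ * t) * (t⁻¹ * g₂ * t) by group,
          Lam_mul H lam (mem_conj H h₁ t) (mem_conj H h₂ t), mul_assoc]
    · rw [rhoFun_of_mem H lam t h₁, rhoFun_of_not_mem H lam t h₂,
        rhoFun_of_not_mem H lam t (mul_not_mem_left H hH h₁ h₂)]
      simp only [dmap_apply, smap_apply, Prod.mk.injEq]
      constructor
      · rw [show g₁ * g₂ * t = g₁ * (g₂ * t) by group,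
          Lam_mul H lam h₁ (mul_mem_of_not_mem H hH h₂ ht), mul_assoc]
      · rw [show t⁻¹ * (g₁ * g₂) = (t⁻¹ * g₁ * t) * (t⁻¹ * g₂) by group,
          Lam_mul H lam (mem_conj H h₁ t) (mul_mem_of_not_mem H hH (not_mem_inv H ht) h₂), mul_assoc]
    · rw [rhoFun_of_not_mem H lam t h₁, rhoFun_of_mem H lam t h₂,
        rhoFun_of_not_mem H lam t (mul_not_mem_right H hH h₁ h₂)]
      simp only [dmap_apply, smap_apply, Prod.mk.injEq]
      constructor
      · rw [show g₁ * g₂ * t = (g₁ * t) * (t⁻¹ * g₂ * t) by group,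
          Lam_mul H lam (mul_mem_of_not_mem H hH h₁ ht) (mem_conj H h₂ t), mul_assoc]
      · rw [show t⁻¹ * (g₁ * g₂) = (t⁻¹ * g₁) * g₂ by group,
          Lam_mul H lam (mul_mem_of_not_mem H hH (not_mem_inv H ht) h₁) h₂, mul_assoc]
    · rw [rhoFun_of_not_mem H lam t h₁, rhoFun_of_not_mem H lam t h₂,
        rhoFun_of_mem H lam t (mul_mem_of_not_mem H hH h₁ h₂)]
      simp only [dmap_apply, smap_apply, Prod.mk.injEq]
      constructor
      · rw [show g₁ * g₂ = (g₁ * t) * (t⁻¹ * g₂) by group,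
          Lam_mul H lam (mul_mem_of_not_mem H hH h₁ ht) (mul_mem_of_not_mem H hH (not_mem_inv H ht) h₂),
          mul_assoc]
      · rw [show t⁻¹ * (g₁ * g₂) * t = (t⁻¹ * g₁) * (g₂ * t) by group,
          Lam_mul H lam (mul_mem_of_not_mem H hH (not_mem_inv H ht) h₁) (mul_mem_of_not_mem H hH h₂ ht),
          mul_assoc]


lemma rep_apply [H.Normal] (hH : H.index = 2) (ht : t ∉ H) (g : G) :
    rep H lam hH t ht g = rhoFun H lam t g := rfl

lemma submodule_classification [H.Normal] (hH : H.index = 2) (ht : t ∉ H) {h0 : G}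
    (h0H : h0 ∈ H) (hne : Lam H lam h0 ≠ Lam H lam (t⁻¹ * h0 * t))
    (p : Submodule ℂ (ℂ × ℂ)) (hp : ∀ g, ∀ v ∈ p, rep H lam hH t ht g v ∈ p) :
    p = ⊥ ∨ p = ⊤ := by
  by_cases hbot : p = ⊥
  · exact Or.inl hbot
  right
  obtain ⟨v, hv, hv0⟩ := (Submodule.ne_bot_iff p).mp hbot
  set a := Lam H lam h0 with ha
  set b := Lam H lam (t⁻¹ * h0 * t) with hb
  have hab : a - b ≠ 0 := sub_ne_zero.mpr hne
  have h1 : ((a * v.1, b * v.2) : ℂ × ℂ) ∈ p := by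
    have := hp h0 v hv
    rwa [rep_apply, rhoFun_of_mem H lam t h0H, dmap_apply] at this
  have hsub1 : (((a - b) * v.1, 0) : ℂ × ℂ) ∈ p := by
    have := p.sub_mem h1 (p.smul_mem b hv)
    convert this using 1
    simp [Prod.ext_iff, smul_eq_mul]
    ring
  have hsub2 : ((0, (a - b) * v.2) : ℂ × ℂ) ∈ p := by
    have := p.sub_mem (p.smul_mem a hv) h1
    convert this using 1
    simp [Prod.ext_iff, smul_eq_mul]
    ring
  have e10 : ∀ c : ℂ, c ≠ 0 → ((c, 0) : ℂ × ℂ) ∈ p → ((1, 0) : ℂ × ℂ) ∈ p := by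
    intro c hc hcp
    have := p.smul_mem c⁻¹ hcp
    simpa [Prod.ext_iff, smul_eq_mul, inv_mul_cancel₀ hc] using this
  have e01 : ∀ c : ℂ, c ≠ 0 → ((0, c) : ℂ × ℂ) ∈ p → ((0, 1) : ℂ × ℂ) ∈ p := by
    intro c hc hcp
    have := p.smul_mem c⁻¹ hcp
    simpa [Prod.ext_iff, smul_eq_mul, inv_mul_cancel₀ hc] using this
  have step : ((1, 0) : ℂ × ℂ) ∈ p → ((0, 1) : ℂ × ℂ) ∈ p := by
    intro h10
    have := hp t _ h10
    rwa [rep_apply, rhoFun_of_not_mem H lam t ht, smap_apply,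
      show (t⁻¹ * t) = 1 by group, Lam_one, mul_zero, mul_one] at this
  have step' : ((0, 1) : ℂ × ℂ) ∈ p → ((1, 0) : ℂ × ℂ) ∈ p := by
    intro h01
    have := hp t _ h01
    rw [rep_apply, rhoFun_of_not_mem H lam t ht, smap_apply, mul_one, mul_zero] at this
    exact e10 _ (Lam_ne_zero H lam (t * t)) this
  have hboth : ((1, 0) : ℂ × ℂ) ∈ p ∧ ((0, 1) : ℂ × ℂ) ∈ p := by
    by_cases hv1 : v.1 = 0
    · have hv2 : v.2 ≠ 0 := by
        intro hv2
        exact hv0 (Prod.ext hv1 hv2)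
      have h01 : ((0, 1) : ℂ × ℂ) ∈ p := e01 _ (mul_ne_zero hab hv2) hsub2
      exact ⟨step' h01, h01⟩
    · have h10 : ((1, 0) : ℂ × ℂ) ∈ p := e10 _ (mul_ne_zero hab hv1) hsub1
      exact ⟨h10, step h10⟩
  refine (Submodule.eq_top_iff'.mpr fun x => ?_)
  have hx : x = x.1 • ((1, 0) : ℂ × ℂ) + x.2 • ((0, 1) : ℂ × ℂ) := by
    simp [Prod.ext_iff, smul_eq_mul]
  rw [hx]
  exact p.add_mem (p.smul_mem _ hboth.1) (p.smul_mem _ hboth.2)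



lemma fdRep_simple_of (ρ : Representation ℂ G (ℂ × ℂ))
    (hsub : ∀ p : Submodule ℂ (ℂ × ℂ), (∀ g v, v ∈ p → ρ g v ∈ p) → p = ⊥ ∨ p = ⊤) :
    Simple (FDRep.of ρ) := by
  constructor
  intro Y f hmono
  constructor
  · intro hiso h0
    rw [h0] at hiso
    have hid : (𝟙 (FDRep.of ρ)) = 0 := by
      have h := IsIso.inv_hom_id (0 : Y ⟶ FDRep.of ρ)
      rw [comp_zero] at h
      exact h.symm
    have h := congrArg (fun (ψ : FDRep.of ρ ⟶ FDRep.of ρ) => ψ.hom ((1, 0) : ℂ × ℂ)) hid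
    simp only [Action.id_hom, Action.zero_hom] at h
    have h' : ((1, 0) : ℂ × ℂ) = 0 := h
    rw [Prod.ext_iff] at h'
    exact one_ne_zero h'.1
  · intro hf0
    have hcomm : ∀ (g : G) (y : Y.V), f.hom.hom.hom (Y.ρ g y) = ρ g (f.hom.hom.hom y) := by
      intro g y
      exact LinearMap.congr_fun (congrArg (fun φ => φ.hom.hom) (f.comm g)) y
    have hrinv : ∀ g v, v ∈ (LinearMap.range f.hom.hom.hom : Submodule ℂ (ℂ × ℂ)) →
        ρ g v ∈ (LinearMap.range f.hom.hom.hom : Submodule ℂ (ℂ × ℂ)) := by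
      rintro g v ⟨y, rfl⟩
      exact ⟨Y.ρ g y, hcomm g y⟩
    rcases hsub _ hrinv with hbot | htop
    · exfalso
      apply hf0
      apply Action.Hom.ext
      apply FGModuleCat.hom_ext
      refine LinearMap.ext fun y => ?_
      have : f.hom.hom.hom y ∈ (LinearMap.range f.hom.hom.hom : Submodule ℂ (ℂ × ℂ)) := ⟨y, rfl⟩
      rw [hbot] at this
      simpa using this
    · have hsurj : Function.Surjective f.hom.hom.hom := LinearMap.range_eq_top.mp htop
      have hinj : Function.Injective f.hom.hom.hom := by
        rw [← LinearMap.ker_eq_bot]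
        by_contra hker
        obtain ⟨y0, hy0mem, hy00⟩ := (Submodule.ne_bot_iff _).mp hker
        have hKinv : ∀ g : G, ∀ y ∈ LinearMap.ker f.hom.hom.hom, Y.ρ g y ∈ LinearMap.ker f.hom.hom.hom := by
          intro g y hy
          rw [LinearMap.mem_ker] at hy ⊢
          exact (hcomm g y).trans (by rw [hy, map_zero])
        let ρK : Representation ℂ G ↥(LinearMap.ker f.hom.hom.hom) :=
          { toFun := fun g => (Y.ρ g).restrict (hKinv g)
            map_one' := by
              refine LinearMap.ext fun x => Subtype.ext ?_
              simp [LinearMap.restrict_apply]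
            map_mul' := fun g₁ g₂ => by
              refine LinearMap.ext fun x => Subtype.ext ?_
              show Y.ρ (g₁ * g₂) (x : Y.V) = Y.ρ g₁ (Y.ρ g₂ (x : Y.V))
              rw [map_mul, Module.End.mul_apply] }
        let K' : FDRep ℂ G := FDRep.of ρK
        let ι : K' ⟶ Y := ⟨ConcreteCategory.ofHom (LinearMap.ker f.hom.hom.hom).subtype, fun g => by ext x; rfl⟩
        have hιf : ι ≫ f = 0 := by
          apply Action.Hom.ext
          apply FGModuleCat.hom_ext
          refine LinearMap.ext fun x => ?_
          have hx : f.hom.hom.hom x.1 = 0 := LinearMap.mem_ker.mp x.2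
          exact hx
        have hι0 : ι = 0 := (cancel_mono f).mp (by rw [hιf, zero_comp])
        have h := congrArg (fun (ψ : K' ⟶ Y) => ψ.hom ⟨y0, hy0mem⟩) hι0
        simp only [Action.zero_hom] at h
        have h' : y0 = 0 := h
        exact hy00 h'
      let e : Y.V ≃ₗ[ℂ] (ℂ × ℂ) := LinearEquiv.ofBijective f.hom.hom.hom ⟨hinj, hsurj⟩
      have hcoe : ∀ y, e y = f.hom.hom.hom y := fun y => rfl
      have h3 : ∀ z, f.hom.hom.hom (e.symm z) = z := fun z => e.apply_symm_apply z
      let γ : FDRep.of ρ ⟶ Y :=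
        ⟨ConcreteCategory.ofHom (e.symm : (ℂ × ℂ) →ₗ[ℂ] Y.V), by
          intro g
          apply FGModuleCat.hom_ext
          refine LinearMap.ext fun x => ?_
          apply hinj
          show f.hom.hom.hom (e.symm (ρ g x)) = f.hom.hom.hom (Y.ρ g (e.symm x))
          rw [hcomm g (e.symm x), h3, h3]⟩
      refine ⟨⟨γ, ?_, ?_⟩⟩
      · apply Action.Hom.ext
        apply FGModuleCat.hom_ext
        refine LinearMap.ext fun y => ?_
        show e.symm (f.hom.hom.hom y) = y
        rw [← hcoe y, e.symm_apply_apply]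
      · apply Action.Hom.ext
        apply FGModuleCat.hom_ext
        refine LinearMap.ext fun x => ?_
        show f.hom.hom.hom (e.symm x) = x
        exact h3 x
lemma map_commutator_subtype (H : Subgroup G) :
    (commutator ↥H).map H.subtype = ⁅H, H⁆ := by
  rw [commutator_def, Subgroup.map_commutator, ← MonoidHom.range_eq_map, Subgroup.range_subtype]

end Stmt12Aux

open CategoryTheory
open scoped commutatorElement

/-- The set of degrees of irreducible complex representations of `G`. -/
noncomputable def cd (G : Type) [Group G] : Set ℕ :=
  {d | ∃ V : FDRep ℂ G, Simple V ∧ Module.finrank ℂ V = d}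

theorem stmt12 (G : Type) [Group G] [Fintype G]
    (hindex : (commutator G).index = 2) (h2 : 2 ∉ cd G) :
    ⁅commutator G, commutator G⁆ = commutator G := by
  classical
  by_contra hne
  set N := ⁅commutator G, commutator G⁆ with hN
  have hNle : N ≤ commutator G := Subgroup.commutator_le_left _ _
  -- an element outside the commutator subgroup
  have htop : commutator G ≠ ⊤ := by
    intro h
    rw [h, Subgroup.index_top] at hindex
    omega
  obtain ⟨t, ht⟩ : ∃ t, t ∉ commutator G := by
    by_contra hc
    push_neg at hc
    exact htop ((Subgroup.eq_top_iff' _).mpr hc)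
  haveI : N.Normal := Subgroup.commutator_normal _ _
  -- there is h0 ∈ G' with ⁅t, h0⁆ ∉ N
  obtain ⟨h0, h0H, hh0⟩ : ∃ h0 ∈ commutator G, ⁅t, h0⁆ ∉ N := by
    by_contra hc
    push_neg at hc
    -- then G ⧸ N is abelian, so commutator G ≤ N, contradiction
    set π := QuotientGroup.mk' N with hπdef
    have hπ : ∀ x : G, π x = 1 ↔ x ∈ N := fun x => QuotientGroup.eq_one_iff x
    have hcommN : ∀ x y : G, ⁅x, y⁆ ∈ N → Commute (π x) (π y) := by
      intro x y h
      rw [← commutatorElement_eq_one_iff_commute, ← map_commutatorElement]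
      exact (hπ _).mpr h
    have ct : ∀ x ∈ commutator G, Commute (π t) (π x) := fun x hx => hcommN t x (hc x hx)
    have chh : ∀ x ∈ commutator G, ∀ y ∈ commutator G, Commute (π x) (π y) := fun x hx y hy =>
      hcommN x y (Subgroup.commutator_mem_commutator hx hy)
    have hdecomp : ∀ x : G, π x = π (x * t⁻¹) * π t := by
      intro x
      rw [← map_mul]
      congr 1
      group
    have callt : ∀ x : G, Commute (π x) (π t) := by
      intro x
      by_cases hx : x ∈ commutator G
      · exact (ct x hx).symm
      · rw [hdecomp x]
        exact Commute.mul_left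
          ((ct _ (Stmt12Aux.mul_mem_of_not_mem _ hindex hx (Stmt12Aux.not_mem_inv _ ht))).symm)
          (Commute.refl _)
    have challH : ∀ x : G, ∀ y ∈ commutator G, Commute (π x) (π y) := by
      intro x y hy
      by_cases hx : x ∈ commutator G
      · exact chh x hx y hy
      · rw [hdecomp x]
        exact Commute.mul_left
          (chh _ (Stmt12Aux.mul_mem_of_not_mem _ hindex hx (Stmt12Aux.not_mem_inv _ ht)) y hy)
          (ct y hy)
    have call : ∀ x y : G, Commute (π x) (π y) := by
      intro x y
      by_cases hy : y ∈ commutator G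
      · exact challH x y hy
      · rw [hdecomp y]
        exact Commute.mul_right
          (challH x _ (Stmt12Aux.mul_mem_of_not_mem _ hindex hy (Stmt12Aux.not_mem_inv _ ht)))
          (callt x)
    have hle : commutator G ≤ N := by
      rw [commutator_def]
      refine Subgroup.commutator_le.mpr fun a _ b _ => (hπ _).mp ?_
      rw [map_commutatorElement]
      exact commutatorElement_eq_one_iff_commute.mpr (call a b)
    exact hne (le_antisymm hNle hle)
  -- build a character of the commutator subgroup separating h0 from its conjugate
  have hconj : t * h0 * t⁻¹ ∈ commutator G :=
    Subgroup.Normal.conj_mem inferInstance h0 h0H t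
  set d : ↥(commutator G) := ⟨t * h0 * t⁻¹, hconj⟩ * (⟨h0, h0H⟩ : ↥(commutator G))⁻¹ with hd
  have hdcoe : (d : G) = ⁅t, h0⁆ := by
    rw [hd, commutatorElement_def]
    rfl
  have hdmem : d ∉ commutator ↥(commutator G) := by
    intro hmem
    have h1 : (d : G) ∈ (commutator ↥(commutator G)).map (commutator G).subtype :=
      Subgroup.mem_map_of_mem _ hmem
    have h2' : (commutator ↥(commutator G)).map (commutator G).subtype = N :=
      Stmt12Aux.map_commutator_subtype _
    rw [h2', hdcoe] at h1
    exact hh0 h1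
  have habel : Abelianization.of d ≠ 1 := fun h => hdmem ((QuotientGroup.eq_one_iff d).mp h)
  obtain ⟨φ, hφ⟩ := CommGroup.exists_apply_ne_one_of_hasEnoughRootsOfUnity (Abelianization ↥(commutator G)) ℂ habel
  set lam : ↥(commutator G) →* ℂˣ := φ.comp Abelianization.of with hlamdef
  have hlam : lam d ≠ 1 := hφ
  have hlamne : lam ⟨t * h0 * t⁻¹, hconj⟩ ≠ lam ⟨h0, h0H⟩ := by
    intro he
    apply hlam
    rw [hd, map_mul, map_inv, he, mul_inv_cancel]
  -- the separating hypothesis for the induced representation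
  have h1H : t * h0 * t⁻¹ ∈ commutator G := hconj
  have hLam : Stmt12Aux.Lam (commutator G) lam (t * h0 * t⁻¹) ≠
      Stmt12Aux.Lam (commutator G) lam (t⁻¹ * (t * h0 * t⁻¹) * t) := by
    have e1 : t⁻¹ * (t * h0 * t⁻¹) * t = h0 := by group
    rw [Stmt12Aux.Lam_mem _ lam h1H, e1, Stmt12Aux.Lam_mem _ lam h0H]
    intro he
    exact hlamne (Units.ext he)
  -- the induced representation is a 2-dimensional irreducible representation of G
  set ρ := Stmt12Aux.rep (commutator G) lam hindex t ht with hρ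
  have hsimple : Simple (FDRep.of ρ) :=
    Stmt12Aux.fdRep_simple_of ρ fun p hp =>
      Stmt12Aux.submodule_classification (commutator G) lam hindex ht h1H hLam p
        (fun g v hv => hp g v hv)
  exact h2 ⟨FDRep.of ρ, hsimple, by show Module.finrank ℂ (ℂ × ℂ) = 2; simp⟩
end

section
/- For every integer n ≥ 5, the number of conjugacy classes of the symmetric group S_n is strictly less than twice the number of conjugacy classes of the alternating group A_n: k(S_n) < 2·k(A_n). -/
open Equiv Equiv.Perm Finset

instance stmt15CommDec {G : Type*} [Monoid G] [DecidableEq G] (a b : G) :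
    Decidable (Commute a b) := decidable_of_iff (a * b = b * a) Iff.rfl

section counting

variable {G : Type*} [Group G] [Fintype G] [DecidableEq G]
variable (H : Subgroup G) [DecidablePred fun x => x ∈ H]

omit [Fintype G] [DecidableEq G] in
lemma stmt15_comm_coe (x y : H) : Commute x y ↔ Commute (x : G) (y : G) := by
  simp [Commute, SemiconjBy, Subtype.ext_iff]

lemma stmt15_full_card :
    Nat.card {p : G × G // Commute p.1 p.2} =
      ∑ x : G, (univ.filter fun y => Commute x y).card := by
  rw [Nat.card_eq_fintype_card, Fintype.card_subtype, Finset.card_filter, Fintype.sum_prod_type]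
  exact Finset.sum_congr rfl fun x _ => (Finset.card_filter _ _).symm

lemma stmt15_sub_card :
    Nat.card {p : H × H // Commute p.1 p.2} =
      ∑ x ∈ univ.filter fun x => x ∈ H, (univ.filter fun y => Commute x y ∧ y ∈ H).card := by
  rw [Nat.card_eq_fintype_card, Fintype.card_subtype, Finset.card_filter, Fintype.sum_prod_type]
  rw [Finset.sum_subtype (p := fun x => x ∈ H) (univ.filter fun x => x ∈ H) (fun x => by simp)
    (fun x => (univ.filter fun y => Commute x y ∧ y ∈ H).card)]
  apply Finset.sum_congr rfl
  intro x _
  calc (∑ y : H, if Commute x y then 1 else 0)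
      = ∑ y : H, (if Commute (x : G) (y : G) ∧ (y : G) ∈ H then 1 else 0) := by
        apply Finset.sum_congr rfl
        intro y _
        exact if_congr (by rw [stmt15_comm_coe]; exact ⟨fun h => ⟨h, y.2⟩, fun h => h.1⟩) rfl rfl
    _ = ∑ y ∈ univ.filter fun y => y ∈ H, (if Commute (x : G) y ∧ y ∈ H then 1 else 0) :=
        (Finset.sum_subtype (p := fun y => y ∈ H) (univ.filter fun y => y ∈ H)
          (fun y => by simp) (fun y => if Commute (x : G) y ∧ y ∈ H then 1 else 0)).symm
    _ = ∑ y : G, if Commute (x : G) y ∧ y ∈ H then 1 else 0 := by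
        rw [Finset.sum_filter]
        apply Finset.sum_congr rfl
        intro y _
        split_ifs <;> tauto
    _ = (univ.filter fun y => Commute (x : G) y ∧ y ∈ H).card := (Finset.card_filter _ _).symm

lemma stmt15_double_ite (p q : G → Prop) [DecidablePred p] [DecidablePred q] :
    ∑ x ∈ univ.filter p, (univ.filter fun y => Commute x y ∧ q y).card
      = ∑ x : G, ∑ y : G, if Commute x y ∧ p x ∧ q y then 1 else 0 := by
  rw [Finset.sum_filter]
  apply Finset.sum_congr rfl
  intro x _
  split_ifs with hp
  · rw [Finset.card_filter]
    exact Finset.sum_congr rfl fun y _ => if_congr (by tauto) rfl rfl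
  · symm
    exact Finset.sum_eq_zero fun y _ => if_neg (by tauto)

lemma stmt15_swap_sum :
    ∑ x ∈ univ.filter fun x => x ∈ H, (univ.filter fun y => Commute x y ∧ ¬ y ∈ H).card
      = ∑ x ∈ univ.filter fun x => ¬ x ∈ H,
          (univ.filter fun y => Commute x y ∧ y ∈ H).card := by
  rw [stmt15_double_ite (fun x => x ∈ H) (fun y => ¬ y ∈ H),
    stmt15_double_ite (fun x => ¬ x ∈ H) (fun y => y ∈ H), Finset.sum_comm]
  apply Finset.sum_congr rfl
  intro x _
  apply Finset.sum_congr rfl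
  intro y _
  exact if_congr ⟨fun ⟨h1, h2, h3⟩ => ⟨h1.symm, h3, h2⟩, fun ⟨h1, h2, h3⟩ => ⟨h1.symm, h3, h2⟩⟩
    rfl rfl

lemma stmt15_split_sum :
    ∑ x : G, (univ.filter fun y => Commute x y).card
      = (((∑ x ∈ univ.filter fun x => x ∈ H, (univ.filter fun y => Commute x y ∧ y ∈ H).card)
        + ∑ x ∈ univ.filter fun x => x ∈ H, (univ.filter fun y => Commute x y ∧ ¬ y ∈ H).card)
        + ((∑ x ∈ univ.filter fun x => ¬ x ∈ H,
            (univ.filter fun y => Commute x y ∧ y ∈ H).card)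
        + ∑ x ∈ univ.filter fun x => ¬ x ∈ H,
            (univ.filter fun y => Commute x y ∧ ¬ y ∈ H).card)) := by
  have h1 : ∀ x : G, (univ.filter fun y => Commute x y).card
      = (univ.filter fun y => Commute x y ∧ y ∈ H).card
        + (univ.filter fun y => Commute x y ∧ ¬ y ∈ H).card := by
    intro x
    rw [← Finset.filter_filter, ← Finset.filter_filter,
      Finset.card_filter_add_card_filter_not (p := fun y => y ∈ H)]
  calc ∑ x : G, (univ.filter fun y => Commute x y).card
      = ∑ x : G, ((univ.filter fun y => Commute x y ∧ y ∈ H).card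
          + (univ.filter fun y => Commute x y ∧ ¬ y ∈ H).card) :=
        Finset.sum_congr rfl fun x _ => h1 x
    _ = (∑ x : G, (univ.filter fun y => Commute x y ∧ y ∈ H).card)
          + ∑ x : G, (univ.filter fun y => Commute x y ∧ ¬ y ∈ H).card := Finset.sum_add_distrib
    _ = _ := by
        rw [← Finset.sum_filter_add_sum_filter_not univ (fun x => x ∈ H)
            (fun x => (univ.filter fun y => Commute x y ∧ y ∈ H).card),
          ← Finset.sum_filter_add_sum_filter_not univ (fun x => x ∈ H)
            (fun x => (univ.filter fun y => Commute x y ∧ ¬ y ∈ H).card)]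
        ring

end counting

section perm

variable {α : Type*} [Fintype α] [DecidableEq α]
  [DecidablePred fun x : Perm α => x ∈ alternatingGroup α]

lemma stmt15_odd_le_even (x : Perm α) :
    (univ.filter fun y => Commute x y ∧ ¬ y ∈ alternatingGroup α).card ≤
      (univ.filter fun y => Commute x y ∧ y ∈ alternatingGroup α).card := by
  rcases (univ.filter fun y => Commute x y ∧ ¬ y ∈ alternatingGroup α).eq_empty_or_nonempty with
    h | ⟨y₀, hy₀⟩
  · rw [h]; exact Nat.zero_le _
  · simp only [Finset.mem_filter, Finset.mem_univ, true_and] at hy₀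
    apply Finset.card_le_card_of_injOn (fun y => y₀⁻¹ * y)
    · intro y hy
      simp only [Finset.coe_filter, Finset.mem_coe, Finset.mem_filter, Finset.mem_univ, true_and,
        Set.mem_setOf_eq] at hy ⊢
      have hs0 : sign y₀ = -1 := (Int.units_eq_one_or _).resolve_left
        (fun h => hy₀.2 (mem_alternatingGroup.mpr h))
      have hs : sign y = -1 := (Int.units_eq_one_or _).resolve_left
        (fun h => hy.2 (mem_alternatingGroup.mpr h))
      refine ⟨(hy₀.1.inv_right).mul_right hy.1, mem_alternatingGroup.mpr ?_⟩
      rw [map_mul, map_inv, hs0, hs]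
      decide
    · intro a _ b _ h
      exact mul_left_cancel h

omit [DecidablePred fun x : Perm α => x ∈ alternatingGroup α] in
lemma stmt15_centralizer_even {N : ℕ} (i : Fin (N + 1)) (h0 : (i : ℕ) ≠ 0)
    (hev : Even (i : ℕ)) (hbig : N + 1 ≤ (i : ℕ) + 2) (g : Perm (Fin (N + 1)))
    (hg : Commute g (Fin.cycleRange i)) : g ∈ alternatingGroup (Fin (N + 1)) := by
  have hi0 : i ≠ 0 := by
    intro h; exact h0 (by simp [h])
  have hcyc : IsCycle (Fin.cycleRange i) := Fin.isCycle_cycleRange hi0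
  obtain ⟨hc', hz⟩ := hcyc.commute_iff.mp hg
  have hsupp : (Fin.cycleRange i).support.card = (i : ℕ) + 1 := by
    have := sum_cycleType (Fin.cycleRange i)
    rw [Fin.cycleType_cycleRange hi0] at this
    simpa using this.symm
  have hfix : ∀ x, g x ≠ x → x ∈ (Fin.cycleRange i).support := by
    intro x
    contrapose!
    intro hx
    have hgx : g x ∉ (Fin.cycleRange i).support := fun h => hx ((hc' x).mp h)
    have hcard : ((Fin.cycleRange i).support)ᶜ.card ≤ 1 := by
      rw [Finset.card_compl, hsupp, Fintype.card_fin]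
      omega
    exact Finset.card_le_one.mp hcard _ (Finset.mem_compl.mpr hgx) _ (Finset.mem_compl.mpr hx)
  have hge : g = ofSubtype (subtypePerm g hc') := (ofSubtype_subtypePerm hc' hfix).symm
  rw [hge]
  obtain ⟨k, hk⟩ := Subgroup.mem_zpowers_iff.mp hz
  rw [mem_alternatingGroup, ← hk, map_zpow, Fin.sign_cycleRange, hev.neg_one_pow, one_zpow]

end perm

theorem stmt15 (n : ℕ) (hn : 5 ≤ n) :
    Nat.card (ConjClasses (Equiv.Perm (Fin n))) <
      2 * Nat.card (ConjClasses (alternatingGroup (Fin n))) := by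
  obtain ⟨m, rfl⟩ : ∃ m, n = m + 5 := ⟨n - 5, by omega⟩
  haveI : DecidablePred fun x : Perm (Fin (m + 5)) => x ∈ alternatingGroup (Fin (m + 5)) :=
    fun x => decidable_of_iff _ mem_alternatingGroup.symm
  set A := alternatingGroup (Fin (m + 5)) with hA
  -- the special even permutation
  set i : Fin (m + 5) := ⟨2 * ((m + 4) / 2), by omega⟩ with hi
  have hival : (i : ℕ) = 2 * ((m + 4) / 2) := rfl
  have hieven : Even (i : ℕ) := ⟨(m + 4) / 2, by rw [hival]; ring⟩
  have hine : (i : ℕ) ≠ 0 := by rw [hival]; omega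
  set σ : Perm (Fin (m + 5)) := Fin.cycleRange i with hσ
  have hcent : ∀ g, Commute g σ → g ∈ A :=
    fun g hg => stmt15_centralizer_even (N := m + 4) i hine hieven (by rw [hival]; omega) g hg
  have hσA : σ ∈ A := by
    rw [hA, mem_alternatingGroup, hσ, Fin.sign_cycleRange]
    exact hieven.neg_one_pow
  haveI : Nontrivial (Fin (m + 5)) :=
    ⟨⟨i, 0, fun h => by rw [Fin.ext_iff] at h; simp [hival] at h⟩⟩
  -- shorthand
  set e : Perm (Fin (m + 5)) → ℕ :=
    fun x => (univ.filter fun y => Commute x y ∧ y ∈ A).card with he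
  set o : Perm (Fin (m + 5)) → ℕ :=
    fun x => (univ.filter fun y => Commute x y ∧ ¬ y ∈ A).card with ho
  have hCs := card_comm_eq_card_conjClasses_mul_card (Perm (Fin (m + 5)))
  have hCa := card_comm_eq_card_conjClasses_mul_card A
  have hCsval : Nat.card {p : Perm (Fin (m + 5)) × Perm (Fin (m + 5)) // Commute p.1 p.2}
      = (((∑ x ∈ univ.filter fun x => x ∈ A, e x) + ∑ x ∈ univ.filter fun x => x ∈ A, o x)
        + ((∑ x ∈ univ.filter fun x => ¬ x ∈ A, e x)
          + ∑ x ∈ univ.filter fun x => ¬ x ∈ A, o x)) := by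
    rw [stmt15_full_card, stmt15_split_sum A]
  have hCaval : Nat.card {p : A × A // Commute p.1 p.2}
      = ∑ x ∈ univ.filter fun x => x ∈ A, e x := stmt15_sub_card A
  have hoσ : o σ = 0 := by
    rw [ho]
    refine Finset.card_eq_zero.mpr (Finset.filter_eq_empty_iff.mpr fun {y} _ => ?_)
    rintro ⟨h1, h2⟩
    exact h2 (hcent y h1.symm)
  have heσ : 0 < e σ := by
    rw [he]
    refine Finset.card_pos.mpr ⟨1, ?_⟩
    simp only [Finset.mem_filter, Finset.mem_univ, true_and]
    exact ⟨Commute.one_right σ, one_mem A⟩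
  have hstrict : (∑ x ∈ univ.filter fun x => x ∈ A, o x)
      < ∑ x ∈ univ.filter fun x => x ∈ A, e x := by
    apply Finset.sum_lt_sum
    · exact fun x _ => stmt15_odd_le_even x
    · exact ⟨σ, Finset.mem_filter.mpr ⟨Finset.mem_univ _, hσA⟩, by rw [hoσ]; exact heσ⟩
  have h34 : (∑ x ∈ univ.filter fun x => ¬ x ∈ A, o x)
      ≤ ∑ x ∈ univ.filter fun x => ¬ x ∈ A, e x :=
    Finset.sum_le_sum fun x _ => stmt15_odd_le_even x
  have hswap : (∑ x ∈ univ.filter fun x => x ∈ A, o x)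
      = ∑ x ∈ univ.filter fun x => ¬ x ∈ A, e x := stmt15_swap_sum A
  -- combine
  have hfour : Nat.card {p : Perm (Fin (m + 5)) × Perm (Fin (m + 5)) // Commute p.1 p.2}
      < 4 * Nat.card {p : A × A // Commute p.1 p.2} := by
    rw [hCsval, hCaval]
    omega
  rw [hCs, hCa] at hfour
  have hcard2 : Nat.card (Perm (Fin (m + 5))) = 2 * Nat.card A := by
    rw [Nat.card_eq_fintype_card, Nat.card_eq_fintype_card, ← two_mul_card_alternatingGroup]
  have hApos : 0 < Nat.card A := Nat.card_pos
  rw [hcard2] at hfour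
  have : Nat.card (ConjClasses (Perm (Fin (m + 5)))) * (2 * Nat.card A)
      < (2 * Nat.card (ConjClasses A)) * (2 * Nat.card A) := by
    calc Nat.card (ConjClasses (Perm (Fin (m + 5)))) * (2 * Nat.card A)
        < 4 * (Nat.card (ConjClasses A) * Nat.card A) := hfour
      _ = (2 * Nat.card (ConjClasses A)) * (2 * Nat.card A) := by ring
  exact Nat.lt_of_mul_lt_mul_right this
end
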